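/- Let A be a ring such that for every essential right ideal I of A the right A-module A/I is Artinian. Then every finitely generated essential extension of a simple right A-module is Artinian. In particular, every semiprime Noetherian ring of Krull dimension one satisfies property (⋄). -/

import Mathlib

universe u

/-- A submodule is essential if it intersects every nonzero submodule nontrivially. -/
def IsEssSub {R M : Type*} [Ring R] [AddCommGroup M] [Module R M] (N : Submodule R M) : Prop :=
  ∀ L : Submodule R M, L ≠ ⊥ → N ⊓ L ≠ ⊥

/-- Property `(⋄)`: every finitely generated essential extension of a simple right
`A`-module is Artinian.  Right `A`-modules are (left) `Aᵐᵒᵖ`-modules. -/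
def HasDiamond (A : Type*) [Ring A] : Prop :=
  ∀ (M : Type u) (_ : AddCommGroup M) (_ : Module Aᵐᵒᵖ M) (_ : Module.Finite Aᵐᵒᵖ M)
    (N : Submodule Aᵐᵒᵖ M), IsSimpleModule Aᵐᵒᵖ N → IsEssSub N → IsArtinian Aᵐᵒᵖ M

section Aux

open MulOpposite

variable {A : Type u} [Ring A]

/-- Right multiplication by `a` applied to `m`, as an `Aᵐᵒᵖ`-linear map `A →ₗ M`. -/
def rmul {M : Type*} [AddCommGroup M] [Module Aᵐᵒᵖ M] (m : M) : A →ₗ[Aᵐᵒᵖ] M where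
  toFun a := op a • m
  map_add' a b := by rw [op_add, add_smul]
  map_smul' r a := by
    simp only [RingHom.id_apply]
    rw [MulOpposite.smul_eq_mul_unop, op_mul, op_unop, mul_smul]

lemma rmul_range {M : Type*} [AddCommGroup M] [Module Aᵐᵒᵖ M] (m : M) :
    LinearMap.range (rmul (A := A) m) = (Aᵐᵒᵖ ∙ m) := by
  apply le_antisymm
  · rintro x ⟨a, rfl⟩
    exact Submodule.smul_mem _ _ (Submodule.mem_span_singleton_self m)
  · rw [Submodule.span_singleton_le_iff_mem]
    exact ⟨1, by simp [rmul]⟩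

lemma ker_rmul_ess {M : Type*} [AddCommGroup M] [Module Aᵐᵒᵖ M] {N : Submodule Aᵐᵒᵖ M}
    (hess : IsEssSub N) (m : M) :
    IsEssSub (LinearMap.ker (N.mkQ.comp (rmul (A := A) m))) := by
  intro L hL
  by_cases hml : Submodule.map (rmul (A := A) m) L = ⊥
  · have hle : L ≤ LinearMap.ker (N.mkQ.comp (rmul (A := A) m)) := by
      intro a ha
      have h0 : rmul (A := A) m a ∈ Submodule.map (rmul (A := A) m) L :=
        Submodule.mem_map_of_mem ha
      rw [hml, Submodule.mem_bot] at h0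
      simp [LinearMap.mem_ker, h0]
    rw [inf_eq_right.mpr hle]
    exact hL
  · obtain ⟨y, hy, hy0⟩ := Submodule.exists_mem_ne_zero_of_ne_bot (hess _ hml)
    obtain ⟨hyN, a, haL, rfl⟩ : _ ∧ ∃ a ∈ L, rmul (A := A) m a = y := by
      simpa [Submodule.mem_inf, Submodule.mem_map] using hy
    rw [Submodule.ne_bot_iff]
    refine ⟨a, Submodule.mem_inf.mpr ⟨?_, haL⟩, ?_⟩
    · simp only [LinearMap.mem_ker, LinearMap.comp_apply]
      rwa [Submodule.mkQ_apply, Submodule.Quotient.mk_eq_zero]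
    · rintro rfl
      exact hy0 (map_zero _)

end Aux

/-- If for every essential right ideal `I` of `A` the right `A`-module `A/I` is
Artinian, then every finitely generated essential extension of a simple right
`A`-module is Artinian, i.e. `A` has property `(⋄)`.  (In particular this applies to
every semiprime Noetherian ring of Krull dimension one, since there factoring by an
essential right ideal drops the Krull dimension.) -/
theorem hasDiamond_of_artinian_factors (A : Type u) [Ring A]
    (h : ∀ I : Submodule Aᵐᵒᵖ A, IsEssSub I → IsArtinian Aᵐᵒᵖ (A ⧸ I)) :
    HasDiamond A := by
  intro M _ _ _ N hsimp hess
  haveI := hsimp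
  have hN : IsArtinian Aᵐᵒᵖ N := inferInstance
  rw [isArtinian_iff_submodule_quotient N]
  refine ⟨hN, ?_⟩
  -- `M ⧸ N` is finitely generated
  obtain ⟨n, v, hv⟩ := Module.Finite.exists_fin (R := Aᵐᵒᵖ) (M := M ⧸ N)
  haveI hinst : ∀ i, IsArtinian Aᵐᵒᵖ (Aᵐᵒᵖ ∙ v i) := by
    intro i
    obtain ⟨m, hm⟩ := N.mkQ_surjective (v i)
    rw [← hm]
    haveI := h _ (ker_rmul_ess hess m)
    haveI : IsArtinian Aᵐᵒᵖ (LinearMap.range (N.mkQ.comp (rmul (A := A) m))) :=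
      isArtinian_of_linearEquiv (N.mkQ.comp (rmul (A := A) m)).quotKerEquivRange
    have heq : LinearMap.range (N.mkQ.comp (rmul (A := A) m)) = (Aᵐᵒᵖ ∙ N.mkQ m) := by
      have hcomp : N.mkQ.comp (rmul (A := A) m) = rmul (A := A) (N.mkQ m) := by
        ext; simp [rmul]
      rw [hcomp, rmul_range]
    rwa [heq] at this
  haveI := isArtinian_iSup (M := fun i => (Aᵐᵒᵖ ∙ v i))
  have htop : (⊤ : Submodule Aᵐᵒᵖ (M ⧸ N)) = ⨆ i, (Aᵐᵒᵖ ∙ v i) := by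
    rw [← hv, Submodule.span_range_eq_iSup]
  rw [← htop] at this
  exact isArtinian_of_linearEquiv (Submodule.topEquiv (R := Aᵐᵒᵖ) (M := M ⧸ N))
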